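/- arXiv:1711.10048 — 3 statements merged into one kernel-verified Lean document; each statement's English description precedes it below -/
import Mathlib

section
/- Let δ > 1, χ > 0 and C > 0 be real numbers, and set A₁ = (1/(δ+1))·((δ+1)/δ)^(−δ)·((δ−1)/δ)^(δ+1). Then the function H(y) = y + A₁·y^(−δ)·χ^(δ+1)·C has minimum value ((δ−1)/δ)·C^(1/(δ+1))·χ on (0,∞); that is, ((δ−1)/δ)·C^(1/(δ+1))·χ is the least element of the image {H(y) : y > 0}. -/
open Real Set

/-- The function `H(y) = y + A₁·y^(−δ)·χ^(δ+1)·C` attains minimum value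
`((δ−1)/δ)·C^(1/(δ+1))·χ` on `(0,∞)`. -/
theorem stmt_0 (δ χ C : ℝ) (hδ : 1 < δ) (hχ : 0 < χ) (hC : 0 < C)
    (A₁ : ℝ) (hA₁ : A₁ = 1 / (δ + 1) * ((δ + 1) / δ) ^ (-δ) * ((δ - 1) / δ) ^ (δ + 1)) :
    IsLeast
      ((fun y : ℝ => y + A₁ * y ^ (-δ) * χ ^ (δ + 1) * C) '' Ioi (0 : ℝ))
      ((δ - 1) / δ * C ^ (1 / (δ + 1)) * χ) := by
  have hδ0 : (0:ℝ) < δ := lt_trans one_pos hδ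
  have hδ1 : (0:ℝ) < δ + 1 := by linarith
  have hδm : (0:ℝ) < δ - 1 := by linarith
  set t : ℝ := (δ+1)/δ with ht
  set s : ℝ := (δ-1)/δ with hs
  have hts : 0 < t := div_pos hδ1 hδ0
  have hss : 0 < s := div_pos hδm hδ0
  set w : ℝ := 1/(δ+1) with hw
  have hw0 : 0 < w := by rw [hw]; positivity
  have hA : (δ+1) * A₁ = t ^ (-δ) * s ^ (δ+1) := by
    rw [hA₁, hw]; field_simp
  have hA₁pos : 0 < A₁ := by
    have h1 : 0 < t ^ (-δ) * s ^ (δ+1) := by positivity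
    nlinarith [hA]
  have hCw : 0 < C ^ w := rpow_pos_of_pos hC w
  constructor
  · -- membership: attained at y₀ = (s/t) * C^w * χ
    refine ⟨s/t * C ^ w * χ, Set.mem_Ioi.mpr (by positivity), ?_⟩
    show s/t * C ^ w * χ + A₁ * (s/t * C ^ w * χ) ^ (-δ) * χ ^ (δ+1) * C
        = s * C ^ w * χ
    have hp2 : t ^ (-δ) * s ^ (δ+1) * (s/t * C ^ w * χ) ^ (-δ) * χ ^ (δ+1) * C
        = s * C ^ w * χ := by
      have hL : 0 < t ^ (-δ) * s ^ (δ+1) * (s/t * C ^ w * χ) ^ (-δ) * χ ^ (δ+1) * C := by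
        positivity
      refine Real.log_injOn_pos (Set.mem_Ioi.mpr hL) (Set.mem_Ioi.mpr (by positivity)) ?_
      simp (config := { maxDischargeDepth := 9 }) only [Real.log_mul, Real.log_rpow, Real.log_div, ne_eq, mul_pos, div_pos,
        Real.rpow_pos_of_pos, ne_of_gt, hts, hss, hχ, hC, hδ0, hδ1, hδm, hw0, not_false_iff]
      rw [hw]
      field_simp
      ring
    have h3 : (δ+1) * (A₁ * (s/t * C ^ w * χ) ^ (-δ) * χ ^ (δ+1) * C) = s * C ^ w * χ := by
      linear_combination ((s/t * C ^ w * χ) ^ (-δ) * χ ^ (δ+1) * C) * hA + hp2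
    have h4 : A₁ * (s/t * C ^ w * χ) ^ (-δ) * χ ^ (δ+1) * C = s * C ^ w * χ / (δ+1) := by
      rw [eq_div_iff hδ1.ne']; linarith [h3]
    rw [h4, hs, ht]
    field_simp
  · -- lower bound via weighted AM-GM
    rintro z ⟨y, hy, rfl⟩
    rw [Set.mem_Ioi] at hy
    show s * C ^ w * χ ≤ y + A₁ * y ^ (-δ) * χ ^ (δ+1) * C
    have hsum : δ * w + w = 1 := by rw [hw]; field_simp
    have amgm := Real.geom_mean_le_arith_mean2_weighted
      (by positivity : (0:ℝ) ≤ δ * w) hw0.le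
      (by positivity : (0:ℝ) ≤ t * y)
      (by positivity : (0:ℝ) ≤ (δ+1) * A₁ * y ^ (-δ) * χ ^ (δ+1) * C) hsum
    have hkey : (t*y) ^ (δ*w) * ((δ+1) * A₁ * y ^ (-δ) * χ ^ (δ+1) * C) ^ w
        = s * C ^ w * χ := by
      rw [hA]
      refine Real.log_injOn_pos (Set.mem_Ioi.mpr (by positivity)) (Set.mem_Ioi.mpr (by positivity)) ?_
      simp (config := { maxDischargeDepth := 9 }) only [Real.log_mul, Real.log_rpow, Real.log_div, ne_eq, mul_pos, div_pos,
        Real.rpow_pos_of_pos, ne_of_gt, hts, hss, hχ, hC, hy, hδ0, hδ1, hδm, hw0, not_false_iff]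
      rw [hw]
      field_simp
      ring
    have h1 : δ * w * (t * y) = y := by rw [hw, ht]; field_simp
    have h2 : w * ((δ+1) * A₁ * y ^ (-δ) * χ ^ (δ+1) * C) = A₁ * y ^ (-δ) * χ ^ (δ+1) * C := by
      rw [hw]; field_simp
    rw [hkey, h1, h2] at amgm
    exact amgm
end

section
/- Let δ > 1, χ > 0 and C > 0 be real numbers, and set A₁ = (1/(δ+1))·((δ+1)/δ)^(−δ)·((δ−1)/δ)^(δ+1). Then for every y > 0 one has y + A₁·y^(−δ)·χ^(δ+1)·C ≥ ((δ−1)/δ)·C^(1/(δ+1))·χ. -/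
open Real Set

/-- For every `y > 0`, `y + A₁·y^(−δ)·χ^(δ+1)·C ≥ ((δ−1)/δ)·C^(1/(δ+1))·χ`. -/
theorem stmt_1 (δ χ C : ℝ) (hδ : 1 < δ) (hχ : 0 < χ) (hC : 0 < C)
    (A₁ : ℝ) (hA₁ : A₁ = 1 / (δ + 1) * ((δ + 1) / δ) ^ (-δ) * ((δ - 1) / δ) ^ (δ + 1)) :
    ∀ y : ℝ, 0 < y →
      (δ - 1) / δ * C ^ (1 / (δ + 1)) * χ ≤ y + A₁ * y ^ (-δ) * χ ^ (δ + 1) * C := by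
  intro y hy
  have hδ0 : (0:ℝ) < δ := by linarith
  have hδ1 : (0:ℝ) < δ + 1 := by linarith
  have hδm : (0:ℝ) < δ - 1 := by linarith
  have hr1 : (0:ℝ) < (δ + 1) / δ := by positivity
  have hr2 : (0:ℝ) < (δ - 1) / δ := by positivity
  have hA : 0 < A₁ := by rw [hA₁]; positivity
  set w₁ : ℝ := δ / (δ + 1) with hw₁def
  set w₂ : ℝ := 1 / (δ + 1) with hw₂def
  have hw : w₁ + w₂ = 1 := by rw [hw₁def, hw₂def]; field_simp
  have hyr : 0 < y ^ (-δ) := rpow_pos_of_pos hy _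
  have hχr : 0 < χ ^ (δ + 1) := rpow_pos_of_pos hχ _
  set p₁ : ℝ := (δ + 1) / δ * y with hp₁def
  set p₂ : ℝ := (δ + 1) * (A₁ * y ^ (-δ) * χ ^ (δ + 1) * C) with hp₂def
  have hp₁ : 0 < p₁ := by positivity
  have hp₂ : 0 < p₂ := by positivity
  have key : p₁ ^ w₁ * p₂ ^ w₂ ≤ w₁ * p₁ + w₂ * p₂ :=
    Real.geom_mean_le_arith_mean2_weighted (le_of_lt (by positivity))
      (le_of_lt (by positivity)) hp₁.le hp₂.le hw
  have hsum : w₁ * p₁ + w₂ * p₂ = y + A₁ * y ^ (-δ) * χ ^ (δ + 1) * C := by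
    rw [hp₁def, hp₂def, hw₁def, hw₂def]; field_simp
  have h1 : p₁ ^ w₁ = ((δ + 1) / δ) ^ w₁ * y ^ w₁ :=
    Real.mul_rpow hr1.le hy.le
  have h2 : p₂ = ((δ + 1) / δ) ^ (-δ) * ((δ - 1) / δ) ^ (δ + 1) * y ^ (-δ) *
      χ ^ (δ + 1) * C := by
    rw [hp₂def, hA₁, hw₂def]; field_simp
  have h3 : p₂ ^ w₂ = (((δ + 1) / δ) ^ (-δ)) ^ w₂ * (((δ - 1) / δ) ^ (δ + 1)) ^ w₂ *
      (y ^ (-δ)) ^ w₂ * (χ ^ (δ + 1)) ^ w₂ * C ^ w₂ := by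
    rw [h2, Real.mul_rpow (by positivity) hC.le, Real.mul_rpow (by positivity) hχr.le,
        Real.mul_rpow (by positivity) hyr.le, Real.mul_rpow (by positivity) (by positivity)]
  have e1 : (δ + 1) * w₂ = 1 := by rw [hw₂def]; field_simp
  have e2 : -δ * w₂ = -w₁ := by rw [hw₂def, hw₁def]; ring
  have h4 : p₂ ^ w₂ = (((δ + 1) / δ) ^ w₁)⁻¹ * ((δ - 1) / δ) * (y ^ w₁)⁻¹ * χ * C ^ w₂ := by
    rw [h3, ← Real.rpow_mul hr1.le, ← Real.rpow_mul hr2.le, ← Real.rpow_mul hy.le,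
        ← Real.rpow_mul hχ.le, e1, e2, Real.rpow_one, Real.rpow_one,
        Real.rpow_neg hr1.le, Real.rpow_neg hy.le]
  have hprod : p₁ ^ w₁ * p₂ ^ w₂ = (δ - 1) / δ * C ^ (1 / (δ + 1)) * χ := by
    rw [h1, h4]
    have hne1 : ((δ + 1) / δ) ^ w₁ ≠ 0 := ne_of_gt (rpow_pos_of_pos hr1 _)
    have hne2 : y ^ w₁ ≠ 0 := ne_of_gt (rpow_pos_of_pos hy _)
    field_simp
    ring
  linarith [hsum ▸ hprod ▸ key]
end

section
/- Let l > 1, χ > 0 and C > 0 be real numbers. Set A₁ = (1/(l+1))·((l+1)/l)^(−l)·((l−1)/l)^(l+1) and λ₀ = (A₁·C·l)^(1/(l+1))·χ. Then: (i) for all real u ≥ 0 and z ≥ 0, ((l−1)/l)·χ·u^l·z ≤ λ₀·u^(l+1) + A₁·λ₀^(−l)·χ^(l+1)·z^(l+1); and (ii) λ₀ + A₁·λ₀^(−l)·χ^(l+1)·C = ((l−1)/l)·C^(1/(l+1))·χ. -/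
open Real

/-- Key absorption step: with the optimal weight `λ₀ = (A₁·C·l)^(1/(l+1))·χ`,
(i) `((l−1)/l)·χ·u^l·z ≤ λ₀·u^(l+1) + A₁·λ₀^(−l)·χ^(l+1)·z^(l+1)` for all `u, z ≥ 0`, and
(ii) `λ₀ + A₁·λ₀^(−l)·χ^(l+1)·C = ((l−1)/l)·C^(1/(l+1))·χ`. -/
theorem stmt_6 (l χ C : ℝ) (hl : 1 < l) (hχ : 0 < χ) (hC : 0 < C)
    (A₁ : ℝ) (hA₁ : A₁ = 1 / (l + 1) * ((l + 1) / l) ^ (-l) * ((l - 1) / l) ^ (l + 1))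
    (lam₀ : ℝ) (hlam₀ : lam₀ = (A₁ * C * l) ^ (1 / (l + 1)) * χ) :
    (∀ u z : ℝ, 0 ≤ u → 0 ≤ z →
        (l - 1) / l * χ * u ^ l * z ≤
          lam₀ * u ^ (l + 1) + A₁ * lam₀ ^ (-l) * χ ^ (l + 1) * z ^ (l + 1)) ∧
      lam₀ + A₁ * lam₀ ^ (-l) * χ ^ (l + 1) * C = (l - 1) / l * C ^ (1 / (l + 1)) * χ := by
  have hl0 : (0:ℝ) < l := lt_trans one_pos hl
  have hl1 : (0:ℝ) < l + 1 := by linarith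
  have hlm : (0:ℝ) < l - 1 := by linarith
  have hp0 : (0:ℝ) < (l + 1) / l := div_pos hl1 hl0
  have hr : (0:ℝ) < (l - 1) / l := div_pos hlm hl0
  have hA : 0 < A₁ := by
    rw [hA₁]
    have h1 := rpow_pos_of_pos hp0 (-l)
    have h2 := rpow_pos_of_pos hr (l + 1)
    positivity
  have hlam : 0 < lam₀ := by
    rw [hlam₀]
    have := rpow_pos_of_pos (show (0:ℝ) < A₁ * C * l by positivity) (1 / (l + 1))
    positivity
  set p : ℝ := (l + 1) / l with hpdef
  have hp : 0 < p := hp0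
  have hlp : l * p = l + 1 := by rw [hpdef]; field_simp
  have hconj : p.HolderConjugate (l + 1) := by
    rw [Real.holderConjugate_iff]; constructor
    · rw [hpdef, lt_div_iff₀ hl0]; linarith
    · rw [hpdef]; field_simp
  -- Part (i), for arbitrary positive weight lam
  have key : ∀ u z : ℝ, 0 ≤ u → 0 ≤ z →
      (l - 1) / l * χ * u ^ l * z ≤
        lam₀ * u ^ (l + 1) + A₁ * lam₀ ^ (-l) * χ ^ (l + 1) * z ^ (l + 1) := by
    intro u z hu hz
    set c : ℝ := p * lam₀ with hcdef
    have hc : 0 < c := mul_pos hp hlam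
    set a : ℝ := c ^ (1 / p) * u ^ l with hadef
    set b : ℝ := c ^ (-(1 / p)) * ((l - 1) / l * χ * z) with hbdef
    have hca : 0 < c ^ (1 / p) := rpow_pos_of_pos hc _
    have hcb : 0 < c ^ (-(1 / p)) := rpow_pos_of_pos hc _
    have ha : 0 ≤ a := by positivity
    have hb : 0 ≤ b := by positivity
    have hab : a * b = (l - 1) / l * χ * u ^ l * z := by
      have h1 : c ^ (1 / p) * c ^ (-(1 / p)) = 1 := by
        rw [← rpow_add hc]; simp
      calc a * b = c ^ (1 / p) * c ^ (-(1 / p)) * (u ^ l * ((l - 1) / l * χ * z)) := by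
            rw [hadef, hbdef]; ring
        _ = u ^ l * ((l - 1) / l * χ * z) := by rw [h1, one_mul]
        _ = (l - 1) / l * χ * u ^ l * z := by ring
    have hap : a ^ p = c * u ^ (l + 1) := by
      rw [hadef, mul_rpow hca.le (rpow_nonneg hu l), ← rpow_mul hc.le, ← rpow_mul hu,
        one_div_mul_cancel hp.ne', rpow_one, hlp]
    have hbq : b ^ (l + 1) = c ^ (-l) * (((l - 1) / l) ^ (l + 1) * χ ^ (l + 1) * z ^ (l + 1)) := by
      have hY : (0:ℝ) ≤ (l - 1) / l * χ := by positivity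
      rw [hbdef, mul_rpow hcb.le (by positivity), ← rpow_mul hc.le,
        mul_rpow hY hz, mul_rpow hr.le hχ.le]
      have : -(1 / p) * (l + 1) = -l := by
        rw [hpdef]; field_simp
      rw [this]
    have hcml : c ^ (-l) = p ^ (-l) * lam₀ ^ (-l) := by
      rw [hcdef, mul_rpow hp.le hlam.le]
    have young := Real.young_inequality_of_nonneg ha hb hconj
    rw [hab, hap, hbq] at young
    have e1 : c * u ^ (l + 1) / p = lam₀ * u ^ (l + 1) := by
      rw [hcdef]; field_simp
    have e2 : c ^ (-l) * (((l - 1) / l) ^ (l + 1) * χ ^ (l + 1) * z ^ (l + 1)) / (l + 1)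
        = A₁ * lam₀ ^ (-l) * χ ^ (l + 1) * z ^ (l + 1) := by
      rw [hcml, hA₁, hpdef]; field_simp
    rw [e1, e2] at young
    exact young
  refine ⟨key, ?_⟩
  -- Part (ii)
  set K : ℝ := (A₁ * C * l) ^ (1 / (l + 1)) with hKdef
  have hK : 0 < K := rpow_pos_of_pos (by positivity) _
  have hKl : K ^ (l + 1) = A₁ * C * l := by
    rw [hKdef, ← rpow_mul (by positivity), one_div_mul_cancel hl1.ne', rpow_one]
  have hlaml : lam₀ ^ (-l) = K ^ (-l) * χ ^ (-l) := by
    rw [hlam₀, mul_rpow hK.le hχ.le]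
  have hχc : χ ^ (-l) * χ ^ (l + 1) = χ := by
    rw [← rpow_add hχ]; norm_num
  have hKc : A₁ * C * K ^ (-l) = K / l := by
    have : K ^ (l + 1) * K ^ (-l) = K := by
      rw [← rpow_add hK]; norm_num
    calc A₁ * C * K ^ (-l) = K ^ (l + 1) * K ^ (-l) / l := by
          rw [hKl]; field_simp
      _ = K / l := by rw [this]
  have lhs_eq : lam₀ + A₁ * lam₀ ^ (-l) * χ ^ (l + 1) * C = χ * K * ((l + 1) / l) := by
    calc lam₀ + A₁ * lam₀ ^ (-l) * χ ^ (l + 1) * C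
        = K * χ + (A₁ * C * K ^ (-l)) * (χ ^ (-l) * χ ^ (l + 1)) := by
          rw [hlaml, hlam₀]; ring
      _ = K * χ + K / l * χ := by rw [hKc, hχc]
      _ = χ * K * ((l + 1) / l) := by field_simp
  rw [lhs_eq]
  -- Now show χ * K * ((l+1)/l) = (l-1)/l * C^(1/(l+1)) * χ, i.e. K = (l-1)/(l+1) * C^(1/(l+1))
  have hKval : K = (l - 1) / (l + 1) * C ^ (1 / (l + 1)) := by
    have hAl : A₁ * C * l = ((l - 1) / (l + 1)) ^ (l + 1) * C := by
      rw [hA₁]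
      have h1 : ((l + 1) / l) ^ (-l) = (l / (l + 1)) ^ l := by
        rw [rpow_neg hp0.le, ← inv_rpow hp0.le]
        congr 1
        rw [inv_div]
      have h2 : (l / (l + 1)) ^ l * (l / (l + 1)) = (l / (l + 1)) ^ (l + 1) := by
        rw [← rpow_add_one (by positivity : (l:ℝ) / (l + 1) ≠ 0)]
      have h3 : (l / (l + 1)) ^ (l + 1) * ((l - 1) / l) ^ (l + 1)
          = ((l - 1) / (l + 1)) ^ (l + 1) := by
        rw [← mul_rpow (by positivity) hr.le]
        congr 1
        field_simp
      calc 1 / (l + 1) * ((l + 1) / l) ^ (-l) * ((l - 1) / l) ^ (l + 1) * C * l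
          = (l / (l + 1)) ^ l * (l / (l + 1)) * ((l - 1) / l) ^ (l + 1) * C := by
            rw [h1]; field_simp
        _ = ((l - 1) / (l + 1)) ^ (l + 1) * C := by rw [h2, h3]
    rw [hKdef, hAl, mul_rpow (by positivity) hC.le, ← rpow_mul (by positivity),
      mul_one_div_cancel hl1.ne', rpow_one]
  rw [hKval]
  have hCp : (0:ℝ) ≤ C ^ (1 / (l + 1)) := (rpow_pos_of_pos hC _).le
  field_simp
end
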